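/- For any g ∈ GL_n(R) and V = Rv ∈ P(R^n) with ‖v‖ = 1, one has d(V, H_g⁻) ≤ ‖gv‖/‖g‖ ≤ d(V, H_g⁻) + σ₂(g)/σ₁(g), and moreover d(gV, V_g⁺) · d(V, H_g⁻) ≤ σ₂(g)/σ₁(g). -/

import Mathlib

/- STATEMENT 1: For g ∈ GL_n(ℝ) with Cartan decomposition g = k' ∘ diag(a) ∘ k,
unit v: d(V,H_g⁻) ≤ ‖gv‖/‖g‖ ≤ d(V,H_g⁻) + σ₂/σ₁ and d(gV,V_g⁺)·d(V,H_g⁻) ≤ σ₂/σ₁,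
where ‖g‖ = σ₁ = a 0, H_g⁻ has unit normal k⁻¹e₁, V_g⁺ = line of k' e₁. -/

open scoped RealInnerProductSpace
noncomputable section

/-- Projective distance `d(ℝv, ℝw) = ‖v ∧ w‖ / (‖v‖ ‖w‖)`. -/
def projDist {n : ℕ} (v w : EuclideanSpace ℝ (Fin n)) : ℝ :=
  Real.sqrt (‖v‖ ^ 2 * ‖w‖ ^ 2 - ⟪v, w⟫ ^ 2) / (‖v‖ * ‖w‖)

/-- Distance from the projective point `ℝv` to the projective hyperplane with
normal vector `u`. -/
def distToHyp {n : ℕ} (v u : EuclideanSpace ℝ (Fin n)) : ℝ :=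
  |⟪v, u⟫| / (‖v‖ * ‖u‖)

/-- The diagonal map with entries `a`. -/
def diagMap {n : ℕ} (a : Fin n → ℝ) (v : EuclideanSpace ℝ (Fin n)) :
    EuclideanSpace ℝ (Fin n) :=
  (WithLp.equiv 2 (Fin n → ℝ)).symm (fun i => a i * v i)

theorem gv_norm_vs_distance_to_repelling_hyperplane
    {n : ℕ} (hn : 2 ≤ n)
    (g : EuclideanSpace ℝ (Fin n) →ₗ[ℝ] EuclideanSpace ℝ (Fin n))
    (k k' : EuclideanSpace ℝ (Fin n) ≃ₗᵢ[ℝ] EuclideanSpace ℝ (Fin n))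
    (a : Fin n → ℝ) (ha : ∀ i, 0 < a i)
    (hmono : ∀ i j : Fin n, i ≤ j → a j ≤ a i)
    (hg : ∀ v, g v = k' (diagMap a (k v)))
    (v : EuclideanSpace ℝ (Fin n)) (hv : ‖v‖ = 1) :
    distToHyp v (k.symm (EuclideanSpace.single (⟨0, by omega⟩ : Fin n) 1))
        ≤ ‖g v‖ / a ⟨0, by omega⟩ ∧
      ‖g v‖ / a ⟨0, by omega⟩
        ≤ distToHyp v (k.symm (EuclideanSpace.single (⟨0, by omega⟩ : Fin n) 1))
            + a ⟨1, by omega⟩ / a ⟨0, by omega⟩ ∧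
      projDist (g v) (k' (EuclideanSpace.single (⟨0, by omega⟩ : Fin n) 1))
          * distToHyp v (k.symm (EuclideanSpace.single (⟨0, by omega⟩ : Fin n) 1))
        ≤ a ⟨1, by omega⟩ / a ⟨0, by omega⟩ := by
  set i0 : Fin n := ⟨0, by omega⟩
  set i1 : Fin n := ⟨1, by omega⟩
  set w : EuclideanSpace ℝ (Fin n) := k v with hw
  set u : EuclideanSpace ℝ (Fin n) := diagMap a w with hu
  have hui : ∀ i, u i = a i * w i := fun i => rfl
  have hwnorm : ‖w‖ = 1 := by rw [hw, k.norm_map, hv]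
  have hgv : g v = k' u := hg v
  have hgvnorm : ‖g v‖ = ‖u‖ := by rw [hgv, k'.norm_map]
  have ha0 : (0:ℝ) < a i0 := ha i0
  have ha1 : (0:ℝ) < a i1 := ha i1
  -- inner products
  have hinner : ⟪v, k.symm (EuclideanSpace.single i0 1)⟫ = w i0 := by
    rw [← k.inner_map_map, k.apply_symm_apply, ← hw]
    simp [EuclideanSpace.inner_single_right]
  have hdth : distToHyp v (k.symm (EuclideanSpace.single i0 1)) = |w i0| := by
    rw [distToHyp, hinner, hv, k.symm.norm_map]
    simp
  -- norm of u squared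
  have husq : ‖u‖ ^ 2 = ∑ i, (a i * w i) ^ 2 := by
    rw [EuclideanSpace.norm_eq, Real.sq_sqrt (by positivity)]
    exact Finset.sum_congr rfl fun i _ => by rw [hui, Real.norm_eq_abs, sq_abs]
  have hwsq : ∑ i, (w i) ^ 2 = 1 := by
    have := EuclideanSpace.norm_eq w
    rw [hwnorm] at this
    have h2 : Real.sqrt (∑ i, ‖w i‖ ^ 2) = 1 := this.symm
    have := congrArg (· ^ 2) h2
    simp only [Real.sq_sqrt (by positivity : (0:ℝ) ≤ ∑ i, ‖w i‖ ^ 2), one_pow] at this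
    simpa [Real.norm_eq_abs, sq_abs] using this
  clear_value w u
  have hNnn : 0 ≤ ‖u‖ := norm_nonneg u
  -- lower bound
  have h1 : (a i0 * w i0) ^ 2 ≤ ‖u‖ ^ 2 := by
    rw [husq]
    exact Finset.single_le_sum (f := fun i => (a i * w i)^2)
      (fun i _ => sq_nonneg _) (Finset.mem_univ i0)
  have hlow : a i0 * |w i0| ≤ ‖u‖ := by
    have : (a i0 * |w i0|) ^ 2 ≤ ‖u‖ ^ 2 := by
      calc (a i0 * |w i0|) ^ 2 = (a i0 * w i0) ^ 2 := by
            rw [mul_pow, mul_pow, sq_abs]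
        _ ≤ ‖u‖ ^ 2 := h1
    nlinarith [abs_nonneg (w i0), ha0.le, mul_nonneg ha0.le (abs_nonneg (w i0))]
  -- tail bound
  have htail : ‖u‖ ^ 2 - (a i0 * w i0) ^ 2 ≤ a i1 ^ 2 := by
    rw [husq]
    have hsplit : ∑ i, (a i * w i) ^ 2 =
        (a i0 * w i0) ^ 2 + ∑ i ∈ Finset.univ.erase i0, (a i * w i) ^ 2 :=
      (Finset.add_sum_erase _ (fun i => (a i * w i) ^ 2) (Finset.mem_univ i0)).symm
    have hb : ∑ i ∈ Finset.univ.erase i0, (a i * w i) ^ 2 ≤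
        ∑ i ∈ Finset.univ.erase i0, a i1 ^ 2 * (w i) ^ 2 := by
      apply Finset.sum_le_sum
      intro i hi
      have hi0 : i ≠ i0 := Finset.ne_of_mem_erase hi
      have h1le : i1 ≤ i := by
        have : (1:ℕ) ≤ i.val := by
          rcases Nat.eq_zero_or_pos i.val with h | h
          · exact absurd (Fin.ext h) hi0
          · omega
        exact this
      have : a i ≤ a i1 := hmono i1 i h1le
      have hai : 0 ≤ a i := (ha i).le
      have hsq : a i * a i ≤ a i1 * a i1 := mul_self_le_mul_self hai this
      nlinarith [sq_nonneg (w i)]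
    have hc : ∑ i ∈ Finset.univ.erase i0, a i1 ^ 2 * (w i) ^ 2 ≤ a i1 ^ 2 := by
      rw [← Finset.mul_sum]
      have : ∑ i ∈ Finset.univ.erase i0, (w i) ^ 2 ≤ 1 := by
        rw [← hwsq]
        exact Finset.sum_le_sum_of_subset_of_nonneg (Finset.subset_univ _)
          (fun i _ _ => sq_nonneg _)
      calc a i1 ^ 2 * ∑ i ∈ Finset.univ.erase i0, (w i) ^ 2
          ≤ a i1 ^ 2 * 1 := mul_le_mul_of_nonneg_left this (sq_nonneg _)
        _ = a i1 ^ 2 := mul_one _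
    linarith
  -- upper bound on ‖u‖
  have hup : ‖u‖ ≤ a i0 * |w i0| + a i1 := by
    have hsq : ‖u‖ ^ 2 ≤ (a i0 * |w i0| + a i1) ^ 2 := by
      have : (a i0 * w i0) ^ 2 = (a i0 * |w i0|) ^ 2 := by
        rw [mul_pow, mul_pow, sq_abs]
      nlinarith [mul_nonneg ha0.le (abs_nonneg (w i0)), ha1.le]
    have hrnn : 0 ≤ a i0 * |w i0| + a i1 := by positivity
    have := Real.sqrt_le_sqrt hsq
    rwa [Real.sqrt_sq hNnn, Real.sqrt_sq hrnn] at this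
  -- positivity of ‖u‖
  have hNpos : 0 < ‖u‖ := by
    rcases eq_or_lt_of_le hNnn with h | h
    · exfalso
      have hu0 : u = 0 := norm_eq_zero.mp h.symm
      have : ∀ i, w i = 0 := by
        intro i
        have := congrFun (congrArg (fun (x : EuclideanSpace ℝ (Fin n)) (i : Fin n) => x i) hu0) i
        simp only [hui] at this
        have h0 : a i * w i = 0 := this
        exact (mul_eq_zero.mp h0).resolve_left (ha i).ne'
      have : w = 0 := PiLp.ext fun i => by simp [this i]
      rw [this] at hwnorm
      simp at hwnorm
    · exact h
  refine ⟨?_, ?_, ?_⟩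
  · rw [hdth, hgvnorm, le_div_iff₀ ha0]
    calc |w i0| * a i0 = a i0 * |w i0| := mul_comm _ _
      _ ≤ ‖u‖ := hlow
  · rw [hdth, hgvnorm, div_le_iff₀ ha0]
    calc ‖u‖ ≤ a i0 * |w i0| + a i1 := hup
      _ = (|w i0| + a i1 / a i0) * a i0 := by field_simp
  · -- third part
    have hproj : projDist (g v) (k' (EuclideanSpace.single i0 1))
        = projDist u (EuclideanSpace.single i0 1) := by
      rw [hgv, projDist, projDist, k'.norm_map, k'.norm_map, k'.inner_map_map]
    rw [hproj, hdth, projDist]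
    have hinner2 : ⟪u, EuclideanSpace.single i0 (1:ℝ)⟫ = a i0 * w i0 := by
      simp [EuclideanSpace.inner_single_right, hui i0]
    rw [hinner2, EuclideanSpace.norm_single, norm_one, mul_one, one_pow, mul_one]
    have hnum : Real.sqrt (‖u‖ ^ 2 - (a i0 * w i0) ^ 2) ≤ a i1 := by
      calc Real.sqrt (‖u‖ ^ 2 - (a i0 * w i0) ^ 2) ≤ Real.sqrt (a i1 ^ 2) :=
            Real.sqrt_le_sqrt htail
        _ = a i1 := Real.sqrt_sq ha1.le
    have hsqrtnn : 0 ≤ Real.sqrt (‖u‖ ^ 2 - (a i0 * w i0) ^ 2) := Real.sqrt_nonneg _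
    rw [div_mul_eq_mul_div, div_le_div_iff₀ hNpos ha0]
    calc Real.sqrt (‖u‖ ^ 2 - (a i0 * w i0) ^ 2) * |w i0| * a i0
        ≤ a i1 * |w i0| * a i0 := by
          apply mul_le_mul_of_nonneg_right _ ha0.le
          exact mul_le_mul_of_nonneg_right hnum (abs_nonneg _)
      _ = a i1 * (a i0 * |w i0|) := by ring
      _ ≤ a i1 * ‖u‖ := mul_le_mul_of_nonneg_left hlow ha1.le
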